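/- Let S be a commutative Noetherian ring and 𝔞 a proper ideal of S such that the 𝔞-adic topology on S is separated, i.e. ⋂_{n≥1} 𝔞ⁿ = 0. Let S → A be a ring morphism, F an S-module, and π: F → A a surjective S-module map whose kernel H = ker π satisfies H ⊆ 𝔞F. Let x ∈ S be a non-zero-divisor such that H ⊆ xF and such that x ∈ I for every ideal I of S with H ⊆ I·F (i.e. the principal ideal (x) is the smallest ideal f of S with H ⊆ f·F). Then there exists h ∈ A with h ∉ 𝔞A and x·h = 0 in A. -/

import Mathlib

/-- Let `S` be a commutative Noetherian ring and `𝔞` a proper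
ideal of `S` with `⋂_{n≥1} 𝔞ⁿ = 0` (the `𝔞`-adic topology is separated).  Let
`S → A` be a ring morphism, `F` an `S`-module and `π : F → A` a surjective
`S`-linear map with `H = ker π ⊆ 𝔞F`.  Let `x ∈ S` be a non-zero-divisor such
that `H ⊆ xF` and `(x)` is the smallest ideal `f` of `S` with `H ⊆ f·F`
(i.e. `x ∈ I` for every ideal `I` with `H ⊆ I·F`).  Then there is `h ∈ A` with
`h ∉ 𝔞A` and `x·h = 0` in `A`. -/
theorem exists_killed_by_flatificator_generator {S : Type*} [CommRing S]
    [IsNoetherianRing S] (𝔞 : Ideal S) (h𝔞 : 𝔞 ≠ ⊤)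
    (hsep : (⨅ n : ℕ, 𝔞 ^ (n + 1)) = ⊥)
    {A : Type*} [CommRing A] [Algebra S A]
    {F : Type*} [AddCommGroup F] [Module S F]
    (π : F →ₗ[S] A) (hπ : Function.Surjective π)
    (hH : LinearMap.ker π ≤ 𝔞 • (⊤ : Submodule S F))
    (x : S) (hx : x ∈ nonZeroDivisors S)
    (hxF : LinearMap.ker π ≤ Ideal.span {x} • (⊤ : Submodule S F))
    (hmin : ∀ I : Ideal S, LinearMap.ker π ≤ I • (⊤ : Submodule S F) → x ∈ I) :
    ∃ h : A, h ∉ Ideal.map (algebraMap S A) 𝔞 ∧ x • h = 0 := by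
  by_contra hcon
  push_neg at hcon
  -- so every h with x • h = 0 lies in 𝔞A
  have key : ∀ h : A, x • h = 0 → h ∈ Ideal.map (algebraMap S A) 𝔞 := by
    intro h hh
    by_contra hmem
    exact (hcon h hmem) hh
  -- Show ker π ≤ (span{x} * 𝔞) • ⊤
  have hker : LinearMap.ker π ≤ (Ideal.span {x} * 𝔞) • (⊤ : Submodule S F) := by
    intro η hη
    have hη' : η ∈ Ideal.span {x} • (⊤ : Submodule S F) := hxF hη
    rw [Submodule.ideal_span_singleton_smul] at hη'
    obtain ⟨f, -, rfl⟩ := Set.mem_smul_set.mp hη'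
    -- x • π f = 0
    have hxf : x • π f = 0 := by
      rw [← map_smul]
      exact (LinearMap.mem_ker).mp hη
    have hπf : π f ∈ 𝔞 • (⊤ : Submodule S A) := by
      have := key (π f) hxf
      rw [Ideal.smul_top_eq_map]
      exact this
    -- pull back: π f ∈ π(𝔞 • ⊤)
    have htop : (⊤ : Submodule S A) = Submodule.map π ⊤ := by
      rw [Submodule.map_top, LinearMap.range_eq_top.mpr hπ]
    rw [htop, ← Submodule.map_smul''] at hπf
    obtain ⟨g, hg, hgf⟩ := hπf
    have hfg : f - g ∈ LinearMap.ker π := by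
      simp [LinearMap.mem_ker, map_sub, hgf]
    have hf : f ∈ 𝔞 • (⊤ : Submodule S F) := by
      have := Submodule.add_mem _ (hH hfg) hg
      simpa using this
    rw [mul_smul]
    exact Submodule.smul_mem_smul (Ideal.mem_span_singleton_self x) hf
  have hxmem : x ∈ Ideal.span {x} * 𝔞 := hmin _ hker
  rw [Ideal.mem_span_singleton_mul] at hxmem
  obtain ⟨a, ha, hxa⟩ := hxmem
  have h0 : (1 - a) * x = 0 := by
    have : a * x = x := by rw [mul_comm]; exact hxa
    ring_nf
    rw [mul_comm] at this
    linear_combination -this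
  have h1 : (1 : S) - a = 0 := hx.2 _ h0
  have : a = 1 := (sub_eq_zero.mp h1).symm
  exact h𝔞 (Ideal.eq_top_iff_one 𝔞 |>.mpr (this ▸ ha))
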